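/- Let I ⊆ ℝ be an open interval, A > 0 a constant, and E, G, f : I → ℝ differentiable with G > 0 and A·G'(x)²/G(x) + f'(x)² = E(x) for all x ∈ I. Define φ(x₁,x₂,x₃) = (2√(A·G(x₁))·cos(x₂/(2√A)), 2√(A·G(x₁))·sin(x₂/(2√A)), f(x₁)·cos x₃, f(x₁)·sin x₃) ∈ ℝ⁴. Then ⟨∂₁φ,∂₁φ⟩ = E(x₁), ⟨∂₂φ,∂₂φ⟩ = G(x₁), ⟨∂₃φ,∂₃φ⟩ = f(x₁)², and all mixed inner products ⟨∂ᵢφ,∂ⱼφ⟩ (i ≠ j) vanish; i.e., φ pulls back the Euclidean metric to E dx₁² + G dx₂² + f² dx₃². -/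

import Mathlib

open Matrix Real

theorem one_variable_metric_immersion (a b A : ℝ) (hA : 0 < A)
    (E G f E' G' f' : ℝ → ℝ)
    (hE : ∀ x ∈ Set.Ioo a b, HasDerivAt E (E' x) x)
    (hG : ∀ x ∈ Set.Ioo a b, HasDerivAt G (G' x) x)
    (hf : ∀ x ∈ Set.Ioo a b, HasDerivAt f (f' x) x)
    (hGpos : ∀ x ∈ Set.Ioo a b, 0 < G x)
    (hcon : ∀ x ∈ Set.Ioo a b, A * G' x ^ 2 / G x + f' x ^ 2 = E x)
    (φ : ℝ → ℝ → ℝ → (Fin 4 → ℝ))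
    (hφ : ∀ x₁ x₂ x₃, φ x₁ x₂ x₃ =
      ![2 * Real.sqrt (A * G x₁) * Real.cos (x₂ / (2 * Real.sqrt A)),
        2 * Real.sqrt (A * G x₁) * Real.sin (x₂ / (2 * Real.sqrt A)),
        f x₁ * Real.cos x₃, f x₁ * Real.sin x₃]) :
    ∀ x₁ ∈ Set.Ioo a b, ∀ x₂ x₃ : ℝ,
      (deriv (fun s => φ s x₂ x₃) x₁) ⬝ᵥ (deriv (fun s => φ s x₂ x₃) x₁) = E x₁ ∧
      (deriv (fun s => φ x₁ s x₃) x₂) ⬝ᵥ (deriv (fun s => φ x₁ s x₃) x₂) = G x₁ ∧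
      (deriv (fun s => φ x₁ x₂ s) x₃) ⬝ᵥ (deriv (fun s => φ x₁ x₂ s) x₃) = f x₁ ^ 2 ∧
      (deriv (fun s => φ s x₂ x₃) x₁) ⬝ᵥ (deriv (fun s => φ x₁ s x₃) x₂) = 0 ∧
      (deriv (fun s => φ s x₂ x₃) x₁) ⬝ᵥ (deriv (fun s => φ x₁ x₂ s) x₃) = 0 ∧
      (deriv (fun s => φ x₁ s x₃) x₂) ⬝ᵥ (deriv (fun s => φ x₁ x₂ s) x₃) = 0 := by

  intro x₁ hx x₂ x₃
  have hGx := hGpos x₁ hx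
  have hAG : 0 < A * G x₁ := mul_pos hA hGx
  have hsAG : Real.sqrt (A * G x₁) ≠ 0 := (Real.sqrt_pos.2 hAG).ne'
  have hsA : Real.sqrt A ≠ 0 := (Real.sqrt_pos.2 hA).ne'
  have hAGne : A * G x₁ ≠ 0 := hAG.ne'
  set θ := x₂ / (2 * Real.sqrt A) with hθ
  have h1 : (fun s => φ s x₂ x₃) = fun s =>
      ![2 * Real.sqrt (A * G s) * Real.cos θ, 2 * Real.sqrt (A * G s) * Real.sin θ,
        f s * Real.cos x₃, f s * Real.sin x₃] := funext fun s => hφ s x₂ x₃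
  have h2 : (fun s => φ x₁ s x₃) = fun s =>
      ![2 * Real.sqrt (A * G x₁) * Real.cos (s / (2 * Real.sqrt A)),
        2 * Real.sqrt (A * G x₁) * Real.sin (s / (2 * Real.sqrt A)),
        f x₁ * Real.cos x₃, f x₁ * Real.sin x₃] := funext fun s => hφ x₁ s x₃
  have h3 : (fun s => φ x₁ x₂ s) = fun s =>
      ![2 * Real.sqrt (A * G x₁) * Real.cos θ, 2 * Real.sqrt (A * G x₁) * Real.sin θ,
        f x₁ * Real.cos s, f x₁ * Real.sin s] := funext fun s => hφ x₁ x₂ s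
  have dG : HasDerivAt (fun s => Real.sqrt (A * G s))
      (A * G' x₁ / (2 * Real.sqrt (A * G x₁))) x₁ := ((hG x₁ hx).const_mul A).sqrt hAGne
  have hd1 : HasDerivAt (fun s => φ s x₂ x₃)
      ![2 * (A * G' x₁ / (2 * Real.sqrt (A * G x₁))) * Real.cos θ,
        2 * (A * G' x₁ / (2 * Real.sqrt (A * G x₁))) * Real.sin θ,
        f' x₁ * Real.cos x₃, f' x₁ * Real.sin x₃] x₁ := by
    rw [h1]
    apply hasDerivAt_pi.2
    intro i
    fin_cases i <;>
      simp only [Matrix.cons_val_zero, Matrix.cons_val_one, Matrix.head_cons,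
        Matrix.cons_val_two, Matrix.tail_cons, Matrix.cons_val_three, Fin.isValue]
    · exact (dG.const_mul 2).mul_const _
    · exact (dG.const_mul 2).mul_const _
    · exact (hf x₁ hx).mul_const _
    · exact (hf x₁ hx).mul_const _
  have hd2 : HasDerivAt (fun s => φ x₁ s x₃)
      ![2 * Real.sqrt (A * G x₁) * (-Real.sin θ * (1 / (2 * Real.sqrt A))),
        2 * Real.sqrt (A * G x₁) * (Real.cos θ * (1 / (2 * Real.sqrt A))),
        0, 0] x₂ := by
    rw [h2]
    apply hasDerivAt_pi.2
    intro i
    fin_cases i <;>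
      simp only [Matrix.cons_val_zero, Matrix.cons_val_one, Matrix.head_cons,
        Matrix.cons_val_two, Matrix.tail_cons, Matrix.cons_val_three, Fin.isValue]
    · exact (((hasDerivAt_id x₂).div_const (2 * Real.sqrt A)).cos).const_mul _
    · exact (((hasDerivAt_id x₂).div_const (2 * Real.sqrt A)).sin).const_mul _
    · exact hasDerivAt_const _ _
    · exact hasDerivAt_const _ _
  have hd3 : HasDerivAt (fun s => φ x₁ x₂ s)
      ![0, 0, f x₁ * -Real.sin x₃, f x₁ * Real.cos x₃] x₃ := by
    rw [h3]
    apply hasDerivAt_pi.2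
    intro i
    fin_cases i <;>
      simp only [Matrix.cons_val_zero, Matrix.cons_val_one, Matrix.head_cons,
        Matrix.cons_val_two, Matrix.tail_cons, Matrix.cons_val_three, Fin.isValue]
    · exact hasDerivAt_const _ _
    · exact hasDerivAt_const _ _
    · exact (Real.hasDerivAt_cos x₃).const_mul _
    · exact (Real.hasDerivAt_sin x₃).const_mul _
  rw [hd1.deriv, hd2.deriv, hd3.deriv]
  set u := Real.sqrt (A * G x₁) with hu
  set v := Real.sqrt A with hv
  have hsq : u ^ 2 = A * G x₁ := Real.sq_sqrt hAG.le
  have hsqA : v ^ 2 = A := Real.sq_sqrt hA.le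
  have htrig : Real.sin θ ^ 2 + Real.cos θ ^ 2 = 1 := Real.sin_sq_add_cos_sq θ
  have htrig3 : Real.sin x₃ ^ 2 + Real.cos x₃ ^ 2 = 1 := Real.sin_sq_add_cos_sq x₃
  refine ⟨?_, ?_, ?_, ?_, ?_, ?_⟩ <;>
    simp only [dotProduct, Fin.sum_univ_four, Matrix.cons_val_zero, Matrix.cons_val_one,
      Matrix.head_cons, Matrix.cons_val_two, Matrix.tail_cons, Matrix.cons_val_three]
  · rw [← hcon x₁ hx]
    field_simp
    linear_combination (A^2*G' x₁^2*G x₁) * htrig + (u^2*f' x₁^2*G x₁) * htrig3 -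
      (A*G' x₁^2) * hsq
  · field_simp
    linear_combination (u^2) * htrig + hsq - (G x₁) * hsqA
  · nlinarith [htrig3]
  · ring
  · ring
  · ring
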